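/- Let L ∈ ℝ^{d×p} be such that LLᵀ is invertible, let q ∈ ℝᵈ, v ∈ ℝᵖ, and β ∈ ℝ. Set α = qᵀ(LLᵀ)⁻¹q and γ = qᵀ(LLᵀ)⁻¹Lv, let K = [L q] ∈ ℝ^{d×(p+1)} be L with the column q appended, and let u = (v, β) ∈ ℝ^{p+1} be v with β appended. Then KKᵀ = LLᵀ + qqᵀ is invertible, 1 + α > 0, and ‖R_K u‖² − ‖R_L v‖² = (β − γ)² / (1 + α). -/

import Mathlib

open Matrix

noncomputable section

/-- The matrix `L` with the vector `q` appended as a last column. -/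
def appendCol {d p : ℕ} (L : Matrix (Fin d) (Fin p) ℝ) (q : Fin d → ℝ) :
    Matrix (Fin d) (Fin (p + 1)) ℝ :=
  Matrix.of fun i => Fin.snoc (L i) (q i)

/-- `P_L = Lᵀ (L Lᵀ)⁻¹ L`, the orthogonal projection of `ℝᵖ` onto the row space of `L`. -/
def projRow {d p : ℕ} (L : Matrix (Fin d) (Fin p) ℝ) : Matrix (Fin p) (Fin p) ℝ :=
  Lᵀ * (L * Lᵀ)⁻¹ * L

/-- `R_L = I − P_L`. -/
def residRow {d p : ℕ} (L : Matrix (Fin d) (Fin p) ℝ) : Matrix (Fin p) (Fin p) ℝ :=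
  1 - projRow L

lemma vmv_mulVec {m n : Type*} [Fintype n] (q : m → ℝ) (r x : n → ℝ) :
    vecMulVec q r *ᵥ x = (r ⬝ᵥ x) • q := by
  ext i
  simp only [mulVec, dotProduct, vecMulVec_apply, Pi.smul_apply, smul_eq_mul, Finset.sum_mul]
  exact Finset.sum_congr rfl fun j _ => by ring

lemma dot_mulVec_left {m n : Type*} [Fintype m] [Fintype n] (M : Matrix m n ℝ) (x : n → ℝ)
    (y : m → ℝ) : (M *ᵥ x) ⬝ᵥ y = x ⬝ᵥ (Mᵀ *ᵥ y) := by
  rw [dotProduct_mulVec, vecMul_transpose]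

lemma posdef_of_isUnit {n : Type*} [Fintype n] [DecidableEq n]
    {A : Matrix n n ℝ} (h1 : A.PosSemidef) (h2 : IsUnit A) : A.PosDef := by
  refine posDef_iff_dotProduct_mulVec.mpr ⟨h1.1, fun x hx => ?_⟩
  rcases lt_or_eq_of_le (h1.dotProduct_mulVec_nonneg x) with h | h
  · exact h
  · exfalso
    apply hx
    have h0 : A *ᵥ x = 0 := (h1.dotProduct_mulVec_zero_iff x).mp h.symm
    have hdet := (Matrix.isUnit_iff_isUnit_det A).mp h2
    calc x = (A⁻¹ * A) *ᵥ x := by rw [Matrix.nonsing_inv_mul A hdet, Matrix.one_mulVec]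
    _ = A⁻¹ *ᵥ (A *ᵥ x) := (mulVec_mulVec _ _ _).symm
    _ = 0 := by rw [h0, mulVec_zero]

lemma resid_sq {d p : ℕ} (L : Matrix (Fin d) (Fin p) ℝ) (hL : IsUnit (L * Lᵀ)) (x : Fin p → ℝ) :
    (residRow L *ᵥ x) ⬝ᵥ (residRow L *ᵥ x) =
      x ⬝ᵥ x - (L *ᵥ x) ⬝ᵥ ((L * Lᵀ)⁻¹ *ᵥ (L *ᵥ x)) := by
  have hdet := (Matrix.isUnit_iff_isUnit_det (L * Lᵀ)).mp hL
  have hAAi : (L * Lᵀ) * (L * Lᵀ)⁻¹ = 1 := Matrix.mul_nonsing_inv _ hdet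
  have hAsymm : (L * Lᵀ)ᵀ = L * Lᵀ := by rw [transpose_mul, transpose_transpose]
  have hAinv : ((L * Lᵀ)⁻¹)ᵀ = (L * Lᵀ)⁻¹ := by
    rw [Matrix.transpose_nonsing_inv, hAsymm]
  have hPsymm : (projRow L)ᵀ = projRow L := by
    simp only [projRow, transpose_mul, transpose_transpose, hAinv, Matrix.mul_assoc]
  have h1 : L * (Lᵀ * ((L * Lᵀ)⁻¹ * L)) = L := by
    rw [← Matrix.mul_assoc Lᵀ, ← Matrix.mul_assoc L (Lᵀ * (L * Lᵀ)⁻¹),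
      ← Matrix.mul_assoc L Lᵀ, hAAi, Matrix.one_mul]
  have hPP : projRow L * projRow L = projRow L := by
    simp only [projRow, Matrix.mul_assoc]
    rw [h1]
  have hR : residRow L *ᵥ x = x - projRow L *ᵥ x := by
    simp [residRow, Matrix.sub_mulVec]
  have h2 : (projRow L *ᵥ x) ⬝ᵥ (projRow L *ᵥ x) = x ⬝ᵥ (projRow L *ᵥ x) := by
    rw [dot_mulVec_left, hPsymm, mulVec_mulVec, hPP]
  have h3 : (projRow L *ᵥ x) ⬝ᵥ x = x ⬝ᵥ (projRow L *ᵥ x) := dotProduct_comm _ _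
  have key : (residRow L *ᵥ x) ⬝ᵥ (residRow L *ᵥ x) = x ⬝ᵥ x - x ⬝ᵥ (projRow L *ᵥ x) := by
    rw [hR]
    simp only [dotProduct_sub, sub_dotProduct]
    rw [h2, h3]; ring
  rw [key]
  congr 1
  have hP : projRow L *ᵥ x = Lᵀ *ᵥ ((L * Lᵀ)⁻¹ *ᵥ (L *ᵥ x)) := by
    simp only [projRow, ← mulVec_mulVec]
  rw [hP, dot_mulVec_left]

theorem stmt18 {d p : ℕ} (L : Matrix (Fin d) (Fin p) ℝ)
    (hL : IsUnit (L * Lᵀ))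
    (q : Fin d → ℝ) (v : Fin p → ℝ) (β : ℝ)
    (α γ : ℝ) (hα : α = q ⬝ᵥ ((L * Lᵀ)⁻¹ *ᵥ q))
    (hγ : γ = q ⬝ᵥ ((L * Lᵀ)⁻¹ *ᵥ (L *ᵥ v)))
    (K : Matrix (Fin d) (Fin (p + 1)) ℝ) (hK : K = appendCol L q)
    (u : Fin (p + 1) → ℝ) (hu : u = Fin.snoc v β) :
    K * Kᵀ = L * Lᵀ + vecMulVec q q ∧
      IsUnit (K * Kᵀ) ∧
      0 < 1 + α ∧
      (residRow K *ᵥ u) ⬝ᵥ (residRow K *ᵥ u) -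
          (residRow L *ᵥ v) ⬝ᵥ (residRow L *ᵥ v) =
        (β - γ) ^ 2 / (1 + α) := by
  have hdet := (Matrix.isUnit_iff_isUnit_det (L * Lᵀ)).mp hL
  have hAAi : (L * Lᵀ) * (L * Lᵀ)⁻¹ = 1 := Matrix.mul_nonsing_inv _ hdet
  have hAsymm : (L * Lᵀ)ᵀ = L * Lᵀ := by rw [transpose_mul, transpose_transpose]
  have hAinv : ((L * Lᵀ)⁻¹)ᵀ = (L * Lᵀ)⁻¹ := by
    rw [Matrix.transpose_nonsing_inv, hAsymm]
  -- Part 1 : K Kᵀ = L Lᵀ + q qᵀ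
  have hKK : K * Kᵀ = L * Lᵀ + vecMulVec q q := by
    subst hK
    ext i j
    simp [appendCol, mul_apply, vecMulVec_apply, Fin.sum_univ_castSucc]
  -- positivity facts
  have hApsd : (L * Lᵀ).PosSemidef := by
    have := Matrix.posSemidef_self_mul_conjTranspose L
    rwa [conjTranspose_eq_transpose_of_trivial] at this
  have hApd : (L * Lᵀ).PosDef := posdef_of_isUnit hApsd hL
  have hAinvpd : ((L * Lᵀ)⁻¹).PosDef := hApd.inv
  have hαnn : 0 ≤ α := by
    rw [hα]
    simpa using hAinvpd.posSemidef.dotProduct_mulVec_nonneg q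
  have hspos : 0 < 1 + α := by linarith
  have hs : (1 : ℝ) + α ≠ 0 := ne_of_gt hspos
  have hqq : (vecMulVec q q).PosSemidef := by
    refine posSemidef_iff_dotProduct_mulVec.mpr ⟨?_, ?_⟩
    · rw [Matrix.IsHermitian, conjTranspose_eq_transpose_of_trivial]
      ext i j; simp [vecMulVec_apply, mul_comm]
    · intro x
      have h : star x ⬝ᵥ (vecMulVec q q *ᵥ x) = (q ⬝ᵥ x) ^ 2 := by
        rw [vmv_mulVec, dotProduct_smul]
        simp [dotProduct_comm x q, sq]
      rw [h]; positivity
  have hBpd : (L * Lᵀ + vecMulVec q q).PosDef := hApd.add_posSemidef hqq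
  have hBunit : IsUnit (L * Lᵀ + vecMulVec q q) := hBpd.isUnit
  have hKKunit : IsUnit (K * Kᵀ) := hKK ▸ hBunit
  refine ⟨hKK, hKKunit, hspos, ?_⟩
  -- main computation
  have hBdet := (Matrix.isUnit_iff_isUnit_det _).mp hBunit
  set a : Fin d → ℝ := (L * Lᵀ)⁻¹ *ᵥ q with ha'
  set b : Fin d → ℝ := (L * Lᵀ)⁻¹ *ᵥ (L *ᵥ v) with hb'
  have haA : (L * Lᵀ) *ᵥ a = q := by rw [ha', mulVec_mulVec, hAAi, Matrix.one_mulVec]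
  have hbA : (L * Lᵀ) *ᵥ b = L *ᵥ v := by rw [hb', mulVec_mulVec, hAAi, Matrix.one_mulVec]
  have hqa : q ⬝ᵥ a = α := hα.symm
  have hqb : q ⬝ᵥ b = γ := hγ.symm
  set t : ℝ := (γ + β * α) / (1 + α) with ht
  set y : Fin d → ℝ := b + (β - t) • a with hy
  have hqy : q ⬝ᵥ y = γ + (β - t) * α := by
    rw [hy, dotProduct_add, dotProduct_smul, hqa, hqb, smul_eq_mul]
  have hAy : (L * Lᵀ) *ᵥ y = L *ᵥ v + (β - t) • q := by
    rw [hy, mulVec_add, mulVec_smul, haA, hbA]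
  have hBy : (L * Lᵀ + vecMulVec q q) *ᵥ y = L *ᵥ v + β • q := by
    rw [Matrix.add_mulVec, vmv_mulVec, hAy, hqy]
    have hc : (β - t) + (γ + (β - t) * α) = β := by
      rw [ht]; field_simp; ring
    rw [add_assoc, ← add_smul, hc]
  have hBinv : (L * Lᵀ + vecMulVec q q)⁻¹ *ᵥ (L *ᵥ v + β • q) = y := by
    rw [← hBy, mulVec_mulVec, Matrix.nonsing_inv_mul _ hBdet, Matrix.one_mulVec]
  have hKu : K *ᵥ u = L *ᵥ v + β • q := by
    subst hK hu
    ext i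
    simp [appendCol, mulVec, dotProduct, Fin.sum_univ_castSucc, mul_comm]
  have huu : u ⬝ᵥ u = v ⬝ᵥ v + β ^ 2 := by
    subst hu
    simp [dotProduct, Fin.sum_univ_castSucc, sq]
  -- dot products with a and b
  have hLva : (L *ᵥ v) ⬝ᵥ a = γ := by
    rw [ha', dotProduct_comm, dot_mulVec_left, hAinv, ← hb', hqb]
  have hresK := resid_sq K hKKunit u
  have hresL := resid_sq L hL v
  rw [hresK, hresL, hKK, hKu, hBinv, huu]
  have hdot : (L *ᵥ v + β • q) ⬝ᵥ y =
      (L *ᵥ v) ⬝ᵥ b + (β - t) * γ + β * γ + β * ((β - t) * α) := by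
    rw [hy]
    simp only [dotProduct_add, add_dotProduct, dotProduct_smul, smul_dotProduct,
      smul_eq_mul, hLva, hqa, hqb]
    ring
  rw [hdot, ← hb', ht]
  field_simp
  ring
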